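/- Let n ≥ 3 be a prime, η = e^{2π√−1/n}, and ρ = −1/(n−1). Then for the polynomial p(z) = z^n + 2ρ·Σ_{i=1}^{n−1} z^i + 1: both 1 and −1 are zeros of p, every complex zero of p lies on the unit circle, and no primitive n-th root of unity η^k (k ∈ {1, …, n−1}) is a zero of p. -/

import Mathlib

open Finset Complex

section helpers

private lemma range_eq_insert_icc {n : ℕ} (hn : 2 ≤ n) :
    Finset.range n = insert 0 (Finset.Icc 1 (n - 1)) := by
  ext x; simp only [Finset.mem_range, Finset.mem_insert, Finset.mem_Icc]; omega

private lemma sum_range_eq' {n : ℕ} (hn : 2 ≤ n) (f : ℕ → ℂ) :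
    ∑ i ∈ Finset.range n, f i = f 0 + ∑ i ∈ Finset.Icc 1 (n - 1), f i := by
  rw [range_eq_insert_icc hn, Finset.sum_insert (by simp)]

private lemma re_div_special (z w : ℂ) (hw : Complex.normSq w = 1) :
    ((z + w) / (z - w)).re = (Complex.normSq z - 1) / Complex.normSq (z - w) := by
  have h : (z + w).re * (z - w).re + (z + w).im * (z - w).im = Complex.normSq z - 1 := by
    rw [← hw]
    simp only [Complex.normSq_apply, Complex.add_re, Complex.sub_re, Complex.add_im,
      Complex.sub_im]
    ring
  rw [Complex.div_re, ← add_div, h]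

end helpers

private lemma sum_root_div {n : ℕ} (hn : 2 ≤ n) (η z : ℂ)
    (hprim : IsPrimitiveRoot η n) (hzn : z ^ n ≠ 1) :
    ∑ k ∈ Finset.range n, η ^ k / (z - η ^ k) = n / (z ^ n - 1) := by
  have hηn : η ^ n = 1 := hprim.pow_eq_one
  have hpk : ∀ k : ℕ, (η ^ k) ^ n = 1 := by
    intro k; rw [← pow_mul, mul_comm, pow_mul, hηn, one_pow]
  have hne : ∀ k : ℕ, z - η ^ k ≠ 0 := by
    intro k h
    rw [sub_eq_zero] at h
    exact hzn (by rw [h, hpk])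
  have hzn' : z ^ n - 1 ≠ 0 := sub_ne_zero.2 hzn
  have step1 : ∀ k ∈ Finset.range n,
      η ^ k / (z - η ^ k)
        = (η ^ k * ∑ i ∈ Finset.range n, z ^ i * (η ^ k) ^ (n - 1 - i)) / (z ^ n - 1) := by
    intro k _
    rw [div_eq_div_iff (hne k) hzn']
    have h := geom_sum₂_mul z (η ^ k) n
    rw [hpk k] at h
    linear_combination (-(η ^ k)) * h
  rw [Finset.sum_congr rfl step1, ← Finset.sum_div]
  congr 1
  have epow : ∀ k m : ℕ, η ^ k * (η ^ k) ^ m = (η ^ (m + 1)) ^ k := by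
    intro k m
    rw [← pow_mul, ← pow_mul, ← pow_add]
    congr 1
    ring
  have step2 : ∀ k ∈ Finset.range n,
      η ^ k * ∑ i ∈ Finset.range n, z ^ i * (η ^ k) ^ (n - 1 - i)
        = ∑ i ∈ Finset.range n, z ^ i * (η ^ (n - i)) ^ k := by
    intro k _
    rw [Finset.mul_sum]
    refine Finset.sum_congr rfl fun i hi => ?_
    rw [Finset.mem_range] at hi
    have hm : n - i = (n - 1 - i) + 1 := by omega
    rw [hm, ← epow k (n - 1 - i)]
    ring
  rw [Finset.sum_congr rfl step2, Finset.sum_comm]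
  have step3 : ∀ i ∈ Finset.range n,
      ∑ k ∈ Finset.range n, z ^ i * (η ^ (n - i)) ^ k
        = if i = 0 then (n : ℂ) else 0 := by
    intro i hi
    rw [Finset.mem_range] at hi
    rw [← Finset.mul_sum]
    by_cases h0 : i = 0
    · subst h0
      simp [hηn]
    · have hne1 : η ^ (n - i) ≠ 1 :=
        hprim.pow_ne_one_of_pos_of_lt (by omega) (by omega)
      rw [geom_sum_eq hne1]
      have h1 : (η ^ (n - i)) ^ n = 1 := hpk _
      rw [h1]
      simp [h0]
  rw [Finset.sum_congr rfl step3]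
  simp only [Finset.sum_ite_eq', Finset.mem_range]
  rw [if_pos (by omega)]



/-- For a prime `n ≥ 3`, `η = e^{2π√-1/n}` and `ρ = -1/(n-1)`,
the polynomial `p(z) = z^n + 2ρ·Σ_{i=1}^{n-1} z^i + 1` has both `1` and `-1`
as zeros, all its zeros lie on the unit circle, and no primitive `n`-th root
of unity `η^k`, `k ∈ {1, …, n-1}`, is a zero. -/
theorem zeros_rho_eq_neg_inv (n : ℕ) (hn : n.Prime) (hn3 : 3 ≤ n) (η : ℂ)
    (hη : η = Complex.exp (2 * Real.pi * Complex.I / n)) (ρ : ℝ)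
    (hρ : ρ = -(1 / ((n : ℝ) - 1))) :
    ((1 : ℂ) ^ n + 2 * (ρ : ℂ) * ∑ i ∈ Finset.Icc 1 (n - 1), (1 : ℂ) ^ i + 1 = 0) ∧
    ((-1 : ℂ) ^ n + 2 * (ρ : ℂ) * ∑ i ∈ Finset.Icc 1 (n - 1), (-1 : ℂ) ^ i + 1 = 0) ∧
    (∀ z : ℂ, z ^ n + 2 * (ρ : ℂ) * ∑ i ∈ Finset.Icc 1 (n - 1), z ^ i + 1 = 0 →
      ‖z‖ = 1) ∧
    (∀ k ∈ Finset.Icc 1 (n - 1),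
      (η ^ k) ^ n + 2 * (ρ : ℂ) * ∑ i ∈ Finset.Icc 1 (n - 1), (η ^ k) ^ i + 1 ≠ 0) := by
  have hn2 : 2 ≤ n := by omega
  have hprim : IsPrimitiveRoot η n := by
    rw [hη]; exact Complex.isPrimitiveRoot_exp n (by omega)
  have hηn : η ^ n = 1 := hprim.pow_eq_one
  have hpk : ∀ k : ℕ, (η ^ k) ^ n = 1 := by
    intro k; rw [← pow_mul, mul_comm, pow_mul, hηn, one_pow]
  have hnR : (3 : ℝ) ≤ (n : ℝ) := by exact_mod_cast hn3
  have hρneg : ρ < 0 := by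
    rw [hρ]
    have : 0 < 1 / ((n : ℝ) - 1) := div_pos one_pos (by linarith)
    linarith
  have hkeyval : (1 : ℂ) + 2 * (ρ : ℂ) * (-1) + 1 ≠ 0 := by
    have he : (1 : ℂ) + 2 * (ρ : ℂ) * (-1) + 1 = ((2 - 2 * ρ : ℝ) : ℂ) := by
      push_cast; ring
    rw [he]
    exact_mod_cast ne_of_gt (by linarith : (0 : ℝ) < 2 - 2 * ρ)
  have hn1C : ((n : ℂ) - 1) ≠ 0 := by
    intro h
    rw [sub_eq_zero] at h
    have : n = 1 := by exact_mod_cast h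
    omega
  have hρC : (ρ : ℂ) = -(1 / ((n : ℂ) - 1)) := by rw [hρ]; push_cast; ring
  refine ⟨?_, ?_, ?_, ?_⟩
  · -- z = 1
    have hcard : ∑ i ∈ Finset.Icc 1 (n - 1), (1 : ℂ) ^ i = (n : ℂ) - 1 := by
      simp only [one_pow, Finset.sum_const, Nat.card_Icc, nsmul_eq_mul, mul_one]
      have : n - 1 + 1 - 1 = n - 1 := by omega
      rw [this]
      rw [Nat.cast_sub (by omega : 1 ≤ n)]
      push_cast
      ring
    rw [hcard, one_pow, hρC]
    field_simp
    ring
  · -- z = -1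
    have hodd : Odd n := hn.odd_of_ne_two (by omega)
    have hneg : (-1 : ℂ) ^ n = -1 := Odd.neg_one_pow hodd
    have hsum : ∑ i ∈ Finset.Icc 1 (n - 1), (-1 : ℂ) ^ i = 0 := by
      have h := sum_range_eq' hn2 (fun i => (-1 : ℂ) ^ i)
      rw [neg_one_geom_sum, if_neg (Nat.not_even_iff_odd.2 hodd)] at h
      simpa using h.symm
    rw [hneg, hsum]
    ring
  · -- all zeros on unit circle
    intro z hz
    by_cases hzn : z ^ n = 1
    · by_cases hz1 : z = 1
      · rw [hz1]; simp
      · exfalso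
        have hgs : ∑ i ∈ Finset.range n, z ^ i = 0 := by
          rw [geom_sum_eq hz1, hzn]; simp
        have hIcc : ∑ i ∈ Finset.Icc 1 (n - 1), z ^ i = -1 := by
          have h := sum_range_eq' hn2 (fun i => z ^ i)
          rw [hgs] at h
          simp only [pow_zero] at h
          linear_combination -h
        rw [hIcc, hzn] at hz
        exact hkeyval hz
    · have hzn' : z ^ n - 1 ≠ 0 := sub_ne_zero.2 hzn
      have hne : ∀ k : ℕ, z - η ^ k ≠ 0 := by
        intro k h
        rw [sub_eq_zero] at h
        exact hzn (by rw [h, hpk])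
      have hz1 : z - 1 ≠ 0 := by
        have h := hne 0
        simpa using h
      have hgeo : (1 + ∑ i ∈ Finset.Icc 1 (n - 1), z ^ i) * (z - 1) = z ^ n - 1 := by
        have h := geom_sum_mul z n
        rw [sum_range_eq' hn2 (fun i => z ^ i)] at h
        simpa using h
      have hz' : ((n : ℂ) - 1) * (z ^ n + 1) = 2 * ∑ i ∈ Finset.Icc 1 (n - 1), z ^ i := by
        rw [hρC] at hz
        field_simp at hz
        linear_combination hz
      have hkey : (n : ℂ) * (z ^ n + 1) * (z - 1) = (z + 1) * (z ^ n - 1) := by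
        linear_combination (z - 1) * hz' + 2 * hgeo
      have hsum := sum_root_div hn2 η z hprim hzn
      have hA : ∑ k ∈ Finset.range n, (z + η ^ k) / (z - η ^ k) = (z + 1) / (z - 1) := by
        have e : ∀ k ∈ Finset.range n,
            (z + η ^ k) / (z - η ^ k) = 1 + 2 * (η ^ k / (z - η ^ k)) := by
          intro k _
          field_simp [hne k]
          ring
        rw [Finset.sum_congr rfl e, Finset.sum_add_distrib, ← Finset.mul_sum, hsum,
          Finset.sum_const, Finset.card_range]
        field_simp
        linear_combination hkey
      have hT : ∑ k ∈ Finset.Icc 1 (n - 1), (z + η ^ k) / (z - η ^ k) = 0 := by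
        have h := sum_range_eq' hn2 (fun k => (z + η ^ k) / (z - η ^ k))
        simp only [pow_zero] at h
        rw [hA] at h
        linear_combination -h
      have habsη : ‖η‖ = 1 := by
        rw [hη, Complex.norm_exp]
        have : (2 * (Real.pi : ℂ) * Complex.I / n).re = 0 := by
          simp [Complex.div_re]
        rw [this, Real.exp_zero]
      have hre : ∀ k ∈ Finset.Icc 1 (n - 1), ((z + η ^ k) / (z - η ^ k)).re
          = (Complex.normSq z - 1) * (Complex.normSq (z - η ^ k))⁻¹ := by
        intro k _
        rw [re_div_special z (η ^ k) (by
          rw [Complex.normSq_eq_norm_sq, norm_pow, habsη, one_pow, one_pow]),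
          div_eq_mul_inv]
      have h0 : (Complex.normSq z - 1)
          * ∑ k ∈ Finset.Icc 1 (n - 1), (Complex.normSq (z - η ^ k))⁻¹ = 0 := by
        have h := congrArg Complex.re hT
        rw [Complex.re_sum, Finset.sum_congr rfl hre] at h
        rw [Finset.mul_sum]
        simpa using h
      have hpos : 0 < ∑ k ∈ Finset.Icc 1 (n - 1), (Complex.normSq (z - η ^ k))⁻¹ := by
        apply Finset.sum_pos
        · intro k _
          exact inv_pos.2 (Complex.normSq_pos.2 (hne k))
        · exact ⟨1, Finset.mem_Icc.2 ⟨le_refl 1, by omega⟩⟩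
      have hnsq : Complex.normSq z = 1 := by
        rcases mul_eq_zero.1 h0 with h | h
        · linarith [h]
        · exact absurd h (ne_of_gt hpos)
      have h2 := Complex.sq_norm z
      rw [hnsq] at h2
      nlinarith [norm_nonneg z]
  · -- primitive roots are not zeros
    intro k hk
    rw [Finset.mem_Icc] at hk
    have hw1 : η ^ k ≠ 1 := hprim.pow_ne_one_of_pos_of_lt (by omega) (by omega)
    have hgs : ∑ i ∈ Finset.range n, (η ^ k) ^ i = 0 := by
      rw [geom_sum_eq hw1, hpk k]; simp
    have hIcc : ∑ i ∈ Finset.Icc 1 (n - 1), (η ^ k) ^ i = -1 := by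
      have h := sum_range_eq' hn2 (fun i => (η ^ k) ^ i)
      rw [hgs] at h
      simp only [pow_zero] at h
      linear_combination -h
    rw [hpk k, hIcc]
    exact hkeyval
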